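/- Let f : R → S be a surjective ring homomorphism, let F be an indecomposable injective right S-module, let E be an injective right R-module containing F (viewed as an R-module by restriction of scalars along f) as an essential submodule, and let M be a right S-module. Then Hom_S(M, F) ≠ 0 if and only if Hom_R(M, E) ≠ 0, where in the latter M is viewed as a right R-module by restriction of scalars along f. (This shows that the map f* : injspec(S) → injspec(R), F ↦ E(F_R), maps closed sets to relatively closed sets.) -/

import Mathlib

open MulOpposite

universe u

/-- A module is indecomposable if it is nonzero and is not the internal direct sum of
two nonzero submodules. -/
def IsIndecomposable (R M : Type*) [Ring R] [AddCommGroup M] [Module R M] : Prop :=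
  (∃ x : M, x ≠ 0) ∧
    ∀ A B : Submodule R M, A ⊓ B = ⊥ → A ⊔ B = ⊤ → A = ⊥ ∨ B = ⊥

/-- A submodule is essential if it meets every nonzero submodule nontrivially. -/
def IsEssentialSubmodule {R M : Type*} [Ring R] [AddCommGroup M] [Module R M]
    (A : Submodule R M) : Prop :=
  ∀ N : Submodule R M, N ≠ ⊥ → N ⊓ A ≠ ⊥

theorem stmt18 {R S : Type u} [Ring R] [Ring S] (f : R →+* S)
    (hf : Function.Surjective f)
    -- `F` is an indecomposable injective right `S`-module:
    {F : Type u} [AddCommGroup F] [Module Sᵐᵒᵖ F]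
    (hFind : IsIndecomposable Sᵐᵒᵖ F) (hFinj : Module.Injective Sᵐᵒᵖ F)
    -- `F` viewed as a right `R`-module by restriction of scalars along `f`:
    [Module Rᵐᵒᵖ F] (hresF : ∀ (r : R) (x : F), (op r : Rᵐᵒᵖ) • x = (op (f r) : Sᵐᵒᵖ) • x)
    -- `E` is an injective right `R`-module containing `F` as an essential submodule:
    {E : Type u} [AddCommGroup E] [Module Rᵐᵒᵖ E] (hEinj : Module.Injective Rᵐᵒᵖ E)
    (ι : F →ₗ[Rᵐᵒᵖ] E) (hι : Function.Injective ι)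
    (hess : IsEssentialSubmodule (LinearMap.range ι))
    -- `M` is a right `S`-module, also viewed as a right `R`-module along `f`:
    (M : Type u) [AddCommGroup M] [Module Sᵐᵒᵖ M]
    [Module Rᵐᵒᵖ M] (hresM : ∀ (r : R) (x : M), (op r : Rᵐᵒᵖ) • x = (op (f r) : Sᵐᵒᵖ) • x) :
    (∃ φ : M →ₗ[Sᵐᵒᵖ] F, φ ≠ 0) ↔ (∃ ψ : M →ₗ[Rᵐᵒᵖ] E, ψ ≠ 0) := by
  constructor
  · rintro ⟨φ, hφ⟩
    -- ψ := ι ∘ φ, where φ is R-linear via restriction of scalars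
    refine ⟨{ toFun := fun m => ι (φ m),
              map_add' := by intro x y; simp,
              map_smul' := ?_ }, ?_⟩
    · intro ro x
      obtain ⟨r, rfl⟩ := op_surjective ro
      have : φ ((op r : Rᵐᵒᵖ) • x) = (op r : Rᵐᵒᵖ) • φ x := by
        rw [hresM, hresF, map_smul]
      simp only [RingHom.id_apply]
      rw [this, map_smul]
    · intro h
      obtain ⟨m, hm⟩ : ∃ m, φ m ≠ 0 := by
        by_contra hc
        push_neg at hc
        exact hφ (LinearMap.ext fun m => hc m)
      apply hm
      have := congrArg (fun g => g m) h
      simp only [LinearMap.coe_mk, AddHom.coe_mk, LinearMap.zero_apply] at this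
      exact hι (by simpa using this)
  · rintro ⟨ψ, hψ⟩
    -- N = ψ⁻¹(range ι), as an S-submodule of M
    set N : Submodule Rᵐᵒᵖ M := Submodule.comap ψ (LinearMap.range ι) with hN
    have hNsmul : ∀ (s : Sᵐᵒᵖ) {x : M}, x ∈ N → s • x ∈ N := by
      intro so x hx
      obtain ⟨s, rfl⟩ := op_surjective so
      obtain ⟨r, rfl⟩ := hf s
      have : (op (f r) : Sᵐᵒᵖ) • x = (op r : Rᵐᵒᵖ) • x := (hresM r x).symm
      rw [this]
      exact N.smul_mem _ hx
    set N' : Submodule Sᵐᵒᵖ M :=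
      { carrier := N
        add_mem' := fun ha hb => N.add_mem ha hb
        zero_mem' := N.zero_mem
        smul_mem' := fun s x hx => hNsmul s hx } with hN'
    -- the linear equiv onto range ι
    set e : F ≃ₗ[Rᵐᵒᵖ] LinearMap.range ι := LinearEquiv.ofInjective ι hι with he
    have he_apply : ∀ (y : F) (h : ι y ∈ LinearMap.range ι), e.symm ⟨ι y, h⟩ = y := by
      intro y h
      have : e y = ⟨ι y, h⟩ := Subtype.ext rfl
      rw [← this, LinearEquiv.symm_apply_apply]
    -- g : N' →ₗ[Sᵐᵒᵖ] F
    set g : N' →ₗ[Sᵐᵒᵖ] F :=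
      { toFun := fun x => e.symm ⟨ψ x.1, x.2⟩
        map_add' := by
          rintro ⟨x, hx⟩ ⟨y, hy⟩
          rw [← map_add]
          beta_reduce
          congr 1
          apply Subtype.ext
          show ψ (x + y) = ψ x + ψ y
          exact map_add ψ x y
        map_smul' := by
          rintro so ⟨x, hx⟩
          obtain ⟨s, rfl⟩ := op_surjective so
          obtain ⟨r, rfl⟩ := hf s
          simp only [RingHom.id_apply]
          have hsm : (op (f r) : Sᵐᵒᵖ) • x = (op r : Rᵐᵒᵖ) • x := (hresM r x).symm
          have h1 : ((op (f r) : Sᵐᵒᵖ) • (⟨x, hx⟩ : N') : N').1 = (op r : Rᵐᵒᵖ) • x := hsm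
          have h2 : (⟨ψ ((op (f r) : Sᵐᵒᵖ) • (⟨x, hx⟩ : N') : N').1,
              ((op (f r) : Sᵐᵒᵖ) • (⟨x, hx⟩ : N') : N').2⟩ : LinearMap.range ι)
              = (op r : Rᵐᵒᵖ) • (⟨ψ x, hx⟩ : LinearMap.range ι) := by
            apply Subtype.ext
            show ψ _ = (op r : Rᵐᵒᵖ) • ψ x
            rw [h1, map_smul]
          show e.symm _ = (op (f r) : Sᵐᵒᵖ) • e.symm ⟨ψ x, hx⟩
          rw [h2, map_smul, hresF] } with hg
    -- extend g along the inclusion N' ↪ M using injectivity of F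
    obtain ⟨φ, hφ⟩ := hFinj.out N'.subtype Subtype.coe_injective g
    refine ⟨φ, ?_⟩
    -- find a nonzero element of range ψ ⊓ range ι
    have hrψ : LinearMap.range ψ ≠ ⊥ := by
      intro hb
      apply hψ
      ext m
      have : ψ m ∈ LinearMap.range ψ := ⟨m, rfl⟩
      rw [hb] at this
      simpa using this
    obtain ⟨y, hy, hy0⟩ := (Submodule.ne_bot_iff _).1 (hess _ hrψ)
    obtain ⟨⟨m, hm⟩, hyι⟩ := hy
    have hmN : m ∈ N' := by
      show ψ m ∈ LinearMap.range ι
      rw [hm]; exact hyι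
    intro hc
    obtain ⟨w, hw⟩ := hyι
    have hw0 : w ≠ 0 := by
      intro h0; apply hy0; rw [← hw, h0, map_zero]
    apply hw0
    have h1 : φ m = g ⟨m, hmN⟩ := hφ ⟨m, hmN⟩
    have h2 : g ⟨m, hmN⟩ = e.symm ⟨ψ m, hmN⟩ := rfl
    have h3 : (⟨ψ m, hmN⟩ : LinearMap.range ι) = ⟨ι w, ⟨w, rfl⟩⟩ :=
      Subtype.ext (show ψ m = ι w from hm.trans hw.symm)
    have : φ m = w := by rw [h1, h2, h3]; exact he_apply w _
    rw [← this, hc, LinearMap.zero_apply]
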